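/- Let x ∈ ℝ^n with |x| = 1, let m ≥ 0, and let f, g : ℝ → ℂ^N be continuously differentiable on [−1, 1], each satisfying the boundary conditions −i α_{n+1} Γ(x) h(1) = h(1) and −i α_{n+1} Γ(x) h(−1) = −h(−1) (for h = f and h = g). Then ∫_{−1}^{1} ⟨−i Γ(x) f'(t) + m α_{n+1} f(t), g(t)⟩ dt = ∫_{−1}^{1} ⟨f(t), −i Γ(x) g'(t) + m α_{n+1} g(t)⟩ dt, where ⟨·,·⟩ is the Hermitian inner product on ℂ^N. -/

import Mathlib

open Matrix

lemma dirac_aux_cont (N : ℕ) (G : Matrix (Fin N) (Fin N) ℂ) (u v : ℝ → Fin N → ℂ)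
    (s : Set ℝ) (hu : ContinuousOn u s) (hv : ContinuousOn v s) :
    ContinuousOn (fun t => star (u t) ⬝ᵥ G.mulVec (v t)) s := by
  have : (fun t => star (u t) ⬝ᵥ G.mulVec (v t))
      = fun t => ∑ i, ∑ k, star (u t i) * (G i k * v t k) := by
    ext t; simp [dotProduct, mulVec, Finset.mul_sum]
  rw [this]
  refine continuousOn_finset_sum _ fun i _ => continuousOn_finset_sum _ fun k _ => ?_
  exact (((continuous_apply i).comp_continuousOn hu).star).mul
    (continuousOn_const.mul ((continuous_apply k).comp_continuousOn hv))

lemma dirac_aux_R (N : ℕ) (A G : Matrix (Fin N) (Fin N) ℂ) (m : ℝ) (u v' v : Fin N → ℂ) :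
    ∑ i, (starRingEnd ℂ) (u i) * (((-Complex.I) • G.mulVec v' + (m : ℂ) • A.mulVec v) i)
    = (-Complex.I) * (star u ⬝ᵥ G.mulVec v') + (m : ℂ) * (star u ⬝ᵥ A.mulVec v) := by
  have e1 : ∀ (w z : Fin N → ℂ), ∑ i, (starRingEnd ℂ) (w i) * z i = star w ⬝ᵥ z := by
    intro w z; simp [dotProduct]
  rw [e1, dotProduct_add, dotProduct_smul, dotProduct_smul]
  simp [smul_eq_mul]


lemma dirac_aux_boundary (N : ℕ) (A G : Matrix (Fin N) (Fin N) ℂ)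
    (hGH : Gᴴ = G) (hAH : Aᴴ = A) (hG2 : G * G = 1) (hanti : A * G = -(G * A))
    (ε : ℂ) (hε : ε = 1 ∨ ε = -1) (u v : Fin N → ℂ)
    (hu : ((-Complex.I) • (A * G)).mulVec u = ε • u)
    (hv : ((-Complex.I) • (A * G)).mulVec v = ε • v) :
    star u ⬝ᵥ (G.mulVec v) = 0 := by
  set B : Matrix (Fin N) (Fin N) ℂ := (-Complex.I) • (A * G) with hB
  have hGB : G * B = Complex.I • A := by
    have hanti' : G * A = -(A * G) := by rw [hanti, neg_neg]
    rw [hB, mul_smul_comm, ← mul_assoc, hanti', neg_mul, mul_assoc, hG2, mul_one]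
    simp
  have hBH : Bᴴ = B := by
    rw [hB, conjTranspose_smul, conjTranspose_mul, hGH, hAH]
    simp [hanti, Complex.star_def]
  have hBG : B * G = (-Complex.I) • A := by
    rw [hB, smul_mul_assoc, mul_assoc, hG2, mul_one]
  have h1 : ε * (star u ⬝ᵥ (G.mulVec v)) = Complex.I * (star u ⬝ᵥ A.mulVec v) := by
    calc ε * (star u ⬝ᵥ (G.mulVec v)) = star u ⬝ᵥ (G.mulVec (ε • v)) := by
          rw [mulVec_smul, dotProduct_smul, smul_eq_mul]
      _ = star u ⬝ᵥ ((G * B).mulVec v) := by rw [← hv, mulVec_mulVec]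
      _ = Complex.I * (star u ⬝ᵥ A.mulVec v) := by
          rw [hGB, smul_mulVec, dotProduct_smul, smul_eq_mul]
  have hεc : star ε = ε := by rcases hε with h | h <;> simp [h]
  have h2 : ε * (star u ⬝ᵥ (G.mulVec v)) = -(Complex.I * (star u ⬝ᵥ A.mulVec v)) := by
    calc ε * (star u ⬝ᵥ (G.mulVec v)) = star (ε • u) ⬝ᵥ (G.mulVec v) := by
          rw [star_smul, smul_dotProduct, hεc, smul_eq_mul]
      _ = star (B.mulVec u) ⬝ᵥ (G.mulVec v) := by rw [hu]
      _ = star u ⬝ᵥ ((Bᴴ * G).mulVec v) := by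
          rw [star_mulVec, ← dotProduct_mulVec, mulVec_mulVec]
      _ = -(Complex.I * (star u ⬝ᵥ A.mulVec v)) := by
          rw [hBH, hBG, smul_mulVec, dotProduct_smul]
          simp
  have h3 : ε * (star u ⬝ᵥ (G.mulVec v)) = 0 := by
    linear_combination (h1 + h2) / 2
  rcases hε with h | h <;> simpa [h] using h3


lemma dirac_aux_pointwise (N : ℕ) (A G : Matrix (Fin N) (Fin N) ℂ)
    (hGH : Gᴴ = G) (hAH : Aᴴ = A) (m : ℝ) (u u' v v' : Fin N → ℂ) :
    ∑ i, (starRingEnd ℂ) (((-Complex.I) • G.mulVec u' + (m : ℂ) • A.mulVec u) i) * v i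
    = (∑ i, (starRingEnd ℂ) (u i) * (((-Complex.I) • G.mulVec v' + (m : ℂ) • A.mulVec v) i))
      + Complex.I * (star u' ⬝ᵥ G.mulVec v + star u ⬝ᵥ G.mulVec v') := by
  have e1 : ∀ (w z : Fin N → ℂ), ∑ i, (starRingEnd ℂ) (w i) * z i = star w ⬝ᵥ z := by
    intro w z; simp [dotProduct]
  have e2 : ∀ (w z : Fin N → ℂ), ∑ i, (starRingEnd ℂ) (w i) * z i = star w ⬝ᵥ z := e1
  rw [e1, e2]
  have hL : star ((-Complex.I) • G.mulVec u' + (m : ℂ) • A.mulVec u) ⬝ᵥ v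
      = Complex.I * (star u' ⬝ᵥ G.mulVec v) + (m : ℂ) * (star u ⬝ᵥ A.mulVec v) := by
    rw [star_add, star_smul, star_smul, star_mulVec, star_mulVec, hGH, hAH,
      add_dotProduct, smul_dotProduct, smul_dotProduct, dotProduct_mulVec, dotProduct_mulVec]
    simp [smul_eq_mul]
  have hR : star u ⬝ᵥ ((-Complex.I) • G.mulVec v' + (m : ℂ) • A.mulVec v)
      = (-Complex.I) * (star u ⬝ᵥ G.mulVec v') + (m : ℂ) * (star u ⬝ᵥ A.mulVec v) := by
    rw [dotProduct_add, dotProduct_smul, dotProduct_smul]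
    simp [smul_eq_mul]
  rw [hL, hR]; ring

lemma dirac_aux_deriv (N : ℕ) (G : Matrix (Fin N) (Fin N) ℂ)
    (f f' g g' : ℝ → Fin N → ℂ) (s : Set ℝ) (t : ℝ)
    (hf : HasDerivWithinAt f (f' t) s t) (hg : HasDerivWithinAt g (g' t) s t) :
    HasDerivWithinAt (fun τ => star (f τ) ⬝ᵥ G.mulVec (g τ))
      (star (f' t) ⬝ᵥ G.mulVec (g t) + star (f t) ⬝ᵥ G.mulVec (g' t)) s t := by
  have key : HasDerivWithinAt
      (fun τ => ∑ i, (star (f τ i)) * (∑ k, G i k * g τ k))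
      (∑ i, ((star (f' t i)) * (∑ k, G i k * g t k)
        + (star (f t i)) * (∑ k, G i k * g' t k))) s t := by
    refine HasDerivWithinAt.fun_sum fun i _ => ?_
    exact ((hasDerivWithinAt_pi.1 hf i).star).mul
      (HasDerivWithinAt.fun_sum fun k _ => (hasDerivWithinAt_pi.1 hg k).const_mul (G i k))
  convert key using 1
  simp [dotProduct, mulVec, Finset.sum_add_distrib]
  rw [Finset.sum_add_distrib]; rfl


lemma dirac_aux_GH (n N : ℕ) (α : Fin (n + 1) → Matrix (Fin N) (Fin N) ℂ)
    (hHerm : ∀ j, (α j).IsHermitian) (x : Fin n → ℝ) :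
    (∑ j : Fin n, (x j : ℂ) • α j.castSucc)ᴴ = ∑ j : Fin n, (x j : ℂ) • α j.castSucc := by
  rw [conjTranspose_sum]
  refine Finset.sum_congr rfl fun j _ => ?_
  rw [conjTranspose_smul, (hHerm _).eq]
  simp [Complex.star_def, Complex.conj_ofReal]

lemma dirac_aux_anti (n N : ℕ) (α : Fin (n + 1) → Matrix (Fin N) (Fin N) ℂ)
    (hAnti : ∀ j k, α j * α k + α k * α j = (if j = k then (2 : ℂ) else 0) • 1)
    (x : Fin n → ℝ) :
    α (Fin.last n) * (∑ j : Fin n, (x j : ℂ) • α j.castSucc)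
    = -((∑ j : Fin n, (x j : ℂ) • α j.castSucc) * α (Fin.last n)) := by
  rw [eq_neg_iff_add_eq_zero]
  rw [Finset.mul_sum, Finset.sum_mul, ← Finset.sum_add_distrib]
  refine Finset.sum_eq_zero fun j _ => ?_
  have h := hAnti (Fin.last n) j.castSucc
  have hne : Fin.last n ≠ j.castSucc := (Fin.castSucc_lt_last j).ne'
  rw [if_neg hne, zero_smul] at h
  rw [mul_smul_comm, smul_mul_assoc, ← smul_add, h, smul_zero]

lemma dirac_aux_G2 (n N : ℕ) (α : Fin (n + 1) → Matrix (Fin N) (Fin N) ℂ)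
    (hAnti : ∀ j k, α j * α k + α k * α j = (if j = k then (2 : ℂ) else 0) • 1)
    (x : Fin n → ℝ) (hx : ∑ j, x j ^ 2 = 1) :
    (∑ j : Fin n, (x j : ℂ) • α j.castSucc) * (∑ j : Fin n, (x j : ℂ) • α j.castSucc) = 1 := by
  set G := ∑ j : Fin n, (x j : ℂ) • α j.castSucc with hG
  have expand : G * G = ∑ j : Fin n, ∑ k : Fin n,
      ((x j : ℂ) * (x k : ℂ)) • (α j.castSucc * α k.castSucc) := by
    rw [hG, Finset.sum_mul]
    refine Finset.sum_congr rfl fun j _ => ?_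
    rw [Finset.mul_sum]
    refine Finset.sum_congr rfl fun k _ => ?_
    rw [smul_mul_assoc, mul_smul_comm, smul_smul]
  have sym : G * G = ∑ j : Fin n, ∑ k : Fin n,
      ((x j : ℂ) * (x k : ℂ)) • (α k.castSucc * α j.castSucc) := by
    rw [expand, Finset.sum_comm]
    refine Finset.sum_congr rfl fun j _ => Finset.sum_congr rfl fun k _ => ?_
    rw [mul_comm ((x k : ℂ)) ((x j : ℂ))]
  have key : (2 : ℂ) • (G * G) = (2 : ℂ) • (1 : Matrix (Fin N) (Fin N) ℂ) := by
    have h2 : G * G + G * G = ∑ j : Fin n, ∑ k : Fin n,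
        ((x j : ℂ) * (x k : ℂ)) • ((if j = k then (2 : ℂ) else 0) • 1) := by
      nth_rewrite 1 [expand]
      nth_rewrite 1 [sym]
      rw [← Finset.sum_add_distrib]
      refine Finset.sum_congr rfl fun j _ => ?_
      rw [← Finset.sum_add_distrib]
      refine Finset.sum_congr rfl fun k _ => ?_
      rw [← smul_add, hAnti]
      congr 2
      simp [Fin.castSucc_inj]
    have h3 : ∑ j : Fin n, ∑ k : Fin n,
        ((x j : ℂ) * (x k : ℂ)) • ((if j = k then (2 : ℂ) else 0) • 1)
        = (2 : ℂ) • (1 : Matrix (Fin N) (Fin N) ℂ) := by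
      have : ∀ j : Fin n, ∑ k : Fin n,
          ((x j : ℂ) * (x k : ℂ)) • ((if j = k then (2 : ℂ) else 0) • 1)
          = ((x j : ℂ) ^ 2 * 2) • (1 : Matrix (Fin N) (Fin N) ℂ) := by
        intro j
        rw [Finset.sum_eq_single j]
        · rw [if_pos rfl, smul_smul]; ring_nf
        · intro k _ hk
          rw [if_neg (Ne.symm hk), zero_smul, smul_zero]
        · simp
      rw [Finset.sum_congr rfl fun j _ => this j, ← Finset.sum_smul, ← Finset.sum_mul]
      have : ∑ j : Fin n, (x j : ℂ) ^ 2 = 1 := by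
        rw [← Complex.ofReal_one, ← hx]
        push_cast
        ring
      rw [this, one_mul]
    rw [two_smul, h2, h3, two_smul]
  exact smul_right_injective _ (two_ne_zero) key


/-- Symmetry of the transverse Dirac operator `T h = −i Γ(x) h' + m α_{n+1} h` with
infinite mass boundary conditions:
`∫ ⟨T f, g⟩ dt = ∫ ⟨f, T g⟩ dt` for the Hermitian inner product on `ℂ^N`. -/
theorem transverse_dirac_symmetric (n N : ℕ)
    (α : Fin (n + 1) → Matrix (Fin N) (Fin N) ℂ)
    (hHerm : ∀ j, (α j).IsHermitian)
    (hAnti : ∀ j k, α j * α k + α k * α j = (if j = k then (2 : ℂ) else 0) • 1)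
    (x : Fin n → ℝ) (hx : ∑ j, x j ^ 2 = 1)
    (m : ℝ) (hm : 0 ≤ m)
    (f f' g g' : ℝ → Fin N → ℂ)
    (hf : ∀ t ∈ Set.Icc (-1 : ℝ) 1, HasDerivWithinAt f (f' t) (Set.Icc (-1 : ℝ) 1) t)
    (hf' : ContinuousOn f' (Set.Icc (-1 : ℝ) 1))
    (hg : ∀ t ∈ Set.Icc (-1 : ℝ) 1, HasDerivWithinAt g (g' t) (Set.Icc (-1 : ℝ) 1) t)
    (hg' : ContinuousOn g' (Set.Icc (-1 : ℝ) 1))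
    (hbcf1 : ((-Complex.I) • (α (Fin.last n) *
        ∑ j : Fin n, (x j : ℂ) • α j.castSucc)).mulVec (f 1) = f 1)
    (hbcf2 : ((-Complex.I) • (α (Fin.last n) *
        ∑ j : Fin n, (x j : ℂ) • α j.castSucc)).mulVec (f (-1)) = -f (-1))
    (hbcg1 : ((-Complex.I) • (α (Fin.last n) *
        ∑ j : Fin n, (x j : ℂ) • α j.castSucc)).mulVec (g 1) = g 1)
    (hbcg2 : ((-Complex.I) • (α (Fin.last n) *
        ∑ j : Fin n, (x j : ℂ) • α j.castSucc)).mulVec (g (-1)) = -g (-1)) :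
    (∫ t in (-1 : ℝ)..1, ∑ i, (starRingEnd ℂ) (((-Complex.I) •
          (∑ j : Fin n, (x j : ℂ) • α j.castSucc).mulVec (f' t)
        + (m : ℂ) • (α (Fin.last n)).mulVec (f t)) i) * g t i)
      = ∫ t in (-1 : ℝ)..1, ∑ i, (starRingEnd ℂ) (f t i) * (((-Complex.I) •
          (∑ j : Fin n, (x j : ℂ) • α j.castSucc).mulVec (g' t)
        + (m : ℂ) • (α (Fin.last n)).mulVec (g t)) i) := by
  set G : Matrix (Fin N) (Fin N) ℂ := ∑ j : Fin n, (x j : ℂ) • α j.castSucc with hGdef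
  set A : Matrix (Fin N) (Fin N) ℂ := α (Fin.last n) with hAdef
  have hGH : Gᴴ = G := dirac_aux_GH n N α hHerm x
  have hAH : Aᴴ = A := hHerm (Fin.last n)
  have hanti : A * G = -(G * A) := dirac_aux_anti n N α hAnti x
  have hG2 : G * G = 1 := dirac_aux_G2 n N α hAnti x hx
  have hIcc : Set.uIcc (-1 : ℝ) 1 = Set.Icc (-1 : ℝ) 1 := Set.uIcc_of_le (by norm_num)
  -- continuity of f and g
  have hfc : ContinuousOn f (Set.Icc (-1 : ℝ) 1) := fun t ht => (hf t ht).continuousWithinAt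
  have hgc : ContinuousOn g (Set.Icc (-1 : ℝ) 1) := fun t ht => (hg t ht).continuousWithinAt
  -- auxiliary functions
  set D : ℝ → ℂ := fun t => star (f' t) ⬝ᵥ G.mulVec (g t) + star (f t) ⬝ᵥ G.mulVec (g' t)
    with hDdef
  set φ : ℝ → ℂ := fun t => star (f t) ⬝ᵥ G.mulVec (g t) with hφdef
  -- pointwise identity
  have hpt : ∀ t : ℝ,
      (∑ i, (starRingEnd ℂ) (((-Complex.I) • G.mulVec (f' t) + (m : ℂ) • A.mulVec (f t)) i)
          * g t i)
      = (∑ i, (starRingEnd ℂ) (f t i) *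
          (((-Complex.I) • G.mulVec (g' t) + (m : ℂ) • A.mulVec (g t)) i))
        + Complex.I * D t := fun t =>
    dirac_aux_pointwise N A G hGH hAH m (f t) (f' t) (g t) (g' t)
  -- integrability
  have hDc : ContinuousOn D (Set.Icc (-1 : ℝ) 1) :=
    (dirac_aux_cont N G f' g _ hf' hgc).add (dirac_aux_cont N G f g' _ hfc hg')
  have hDint : IntervalIntegrable D MeasureTheory.volume (-1 : ℝ) 1 :=
    (hIcc ▸ hDc).intervalIntegrable
  have hRc : ContinuousOn (fun t => ∑ i, (starRingEnd ℂ) (f t i) *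
      (((-Complex.I) • G.mulVec (g' t) + (m : ℂ) • A.mulVec (g t)) i))
      (Set.Icc (-1 : ℝ) 1) := by
    have : (fun t => ∑ i, (starRingEnd ℂ) (f t i) *
        (((-Complex.I) • G.mulVec (g' t) + (m : ℂ) • A.mulVec (g t)) i))
        = fun t => (-Complex.I) * (star (f t) ⬝ᵥ G.mulVec (g' t))
          + (m : ℂ) * (star (f t) ⬝ᵥ A.mulVec (g t)) := by
      ext t; exact dirac_aux_R N A G m (f t) (g' t) (g t)
    rw [this]
    exact (continuousOn_const.mul (dirac_aux_cont N G f g' _ hfc hg')).add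
      (continuousOn_const.mul (dirac_aux_cont N A f g _ hfc hgc))
  have hRint : IntervalIntegrable (fun t => ∑ i, (starRingEnd ℂ) (f t i) *
      (((-Complex.I) • G.mulVec (g' t) + (m : ℂ) • A.mulVec (g t)) i))
      MeasureTheory.volume (-1 : ℝ) 1 := (hIcc ▸ hRc).intervalIntegrable
  -- FTC
  have hφcont : ContinuousOn φ (Set.Icc (-1 : ℝ) 1) := dirac_aux_cont N G f g _ hfc hgc
  have hφderiv : ∀ t ∈ Set.Ioo (-1 : ℝ) 1, HasDerivWithinAt φ (D t) (Set.Ioi t) t := by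
    intro t ht
    have h1 : HasDerivWithinAt φ (D t) (Set.Icc (-1 : ℝ) 1) t :=
      dirac_aux_deriv N G f f' g g' _ t (hf t (Set.Ioo_subset_Icc_self ht))
        (hg t (Set.Ioo_subset_Icc_self ht))
    exact (h1.hasDerivAt (Icc_mem_nhds ht.1 ht.2)).hasDerivWithinAt
  have hFTC : ∫ t in (-1 : ℝ)..1, D t = φ 1 - φ (-1) :=
    intervalIntegral.integral_eq_sub_of_hasDeriv_right_of_le (by norm_num) hφcont hφderiv hDint
  -- boundary values vanish
  have hφ1 : φ 1 = 0 := by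
    refine dirac_aux_boundary N A G hGH hAH hG2 hanti 1 (Or.inl rfl) (f 1) (g 1) ?_ ?_
    · rw [one_smul]; exact hbcf1
    · rw [one_smul]; exact hbcg1
  have hφm1 : φ (-1) = 0 := by
    refine dirac_aux_boundary N A G hGH hAH hG2 hanti (-1) (Or.inr rfl) (f (-1)) (g (-1)) ?_ ?_
    · rw [hbcf2, neg_one_smul]
    · rw [hbcg2, neg_one_smul]
  have hD0 : ∫ t in (-1 : ℝ)..1, D t = 0 := by rw [hFTC, hφ1, hφm1, sub_zero]
  calc (∫ t in (-1 : ℝ)..1, ∑ i, (starRingEnd ℂ) (((-Complex.I) • G.mulVec (f' t)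
          + (m : ℂ) • A.mulVec (f t)) i) * g t i)
      = ∫ t in (-1 : ℝ)..1, ((∑ i, (starRingEnd ℂ) (f t i) *
          (((-Complex.I) • G.mulVec (g' t) + (m : ℂ) • A.mulVec (g t)) i))
          + Complex.I * D t) := by
        exact intervalIntegral.integral_congr fun t _ => hpt t
    _ = (∫ t in (-1 : ℝ)..1, ∑ i, (starRingEnd ℂ) (f t i) *
          (((-Complex.I) • G.mulVec (g' t) + (m : ℂ) • A.mulVec (g t)) i))
          + ∫ t in (-1 : ℝ)..1, Complex.I * D t :=
        intervalIntegral.integral_add hRint (hDint.const_mul _)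
    _ = (∫ t in (-1 : ℝ)..1, ∑ i, (starRingEnd ℂ) (f t i) *
          (((-Complex.I) • G.mulVec (g' t) + (m : ℂ) • A.mulVec (g t)) i)) := by
        rw [intervalIntegral.integral_const_mul, hD0, mul_zero, add_zero]
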